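/- arXiv:1209.4405 — 2 statements merged into one kernel-verified Lean document; each statement's English description precedes it below -/
import Mathlib

section
/- Let n ≥ 1 and let L0 = UΣVᵀ be a rank-r matrix with reduced SVD, T the associated tangent subspace, S0 a matrix with support subspace Ω, M = L0 + S0, Q a linear subspace of ℝ^{n×n}, Γ = Q ∩ T^⊥, and 0 < λ < 1. Assume dim(Q^⊥ ⊕ T ⊕ Ω) = dim(Q^⊥) + dim(T) + dim(Ω) (so Γ^⊥ = Q^⊥ ⊕ T) and ‖P_Ω P_{Γ^⊥}‖ < 1/2. If there exist matrices W, F, D ∈ ℝ^{n×n} such that UVᵀ + W = λ(sgn(S0) + F + P_Ω D), this matrix lies in Q, and P_T W = 0, ‖W‖ < 1/2, P_Ω F = 0, ‖F‖_∞ < 1/2, and ‖P_Ω D‖_F ≤ 1/4, then (L0, S0) is the unique minimizer of ‖L‖_* + λ‖S‖_1 subject to P_Q M = P_Q(L + S). -/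
open scoped BigOperators Matrix

abbrev Mat (n : ℕ) := Matrix (Fin n) (Fin n) ℝ

/-- Trace (Frobenius) inner product `⟨X, Y⟩ = trace (Xᵀ Y)`. -/
def finner {n : ℕ} (X Y : Mat n) : ℝ := ∑ i, ∑ j, X i j * Y i j

/-- Frobenius norm. -/
noncomputable def fnorm {n : ℕ} (X : Mat n) : ℝ := Real.sqrt (finner X X)

/-- Entrywise ℓ¹ norm. -/
def l1Norm {n : ℕ} (X : Mat n) : ℝ := ∑ i, ∑ j, |X i j|

/-- Entrywise ℓ∞ norm. -/
noncomputable def linfNorm {n : ℕ} (X : Mat n) : ℝ := ⨆ p : Fin n × Fin n, |X p.1 p.2|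

/-- Spectral (ℓ² operator) norm. -/
noncomputable def specNorm {n : ℕ} (X : Mat n) : ℝ := ‖Matrix.toEuclideanCLM (𝕜 := ℝ) X‖

/-- Nuclear norm: the sum of the singular values, i.e. of the square roots of the
eigenvalues of `Xᵀ * X`. -/
noncomputable def nucNorm {n : ℕ} (X : Mat n) : ℝ :=
  ∑ i, Real.sqrt ((Matrix.isHermitian_conjTranspose_mul_self X).eigenvalues i)

/-- Operator norm of a linear map on matrix space, w.r.t. the Frobenius norm:
`sup {‖A X‖_F : ‖X‖_F = 1}`. -/
noncomputable def opNorm {n : ℕ} (A : Mat n →ₗ[ℝ] Mat n) : ℝ :=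
  sSup {c : ℝ | ∃ X : Mat n, fnorm X = 1 ∧ c = fnorm (A X)}

/-- `P` is the orthogonal projection onto the subspace `V` (w.r.t. the trace inner product). -/
def IsOrthProj {n : ℕ} (V : Submodule ℝ (Mat n)) (P : Mat n →ₗ[ℝ] Mat n) : Prop :=
  (∀ X, P X ∈ V) ∧ (∀ X ∈ V, P X = X) ∧ (∀ X, ∀ Y ∈ V, finner (X - P X) Y = 0)

/-- Orthogonal complement of a subspace of matrix space w.r.t. the trace inner product. -/
def orthComp {n : ℕ} (V : Submodule ℝ (Mat n)) : Submodule ℝ (Mat n) where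
  carrier := {X | ∀ Y ∈ V, finner X Y = 0}
  zero_mem' := by intro Y hY; simp [finner]
  add_mem' := by
    intro a b ha hb Y hY
    have h1 := ha Y hY
    have h2 := hb Y hY
    simp only [finner, Matrix.add_apply, add_mul, Finset.sum_add_distrib] at *
    rw [h1, h2]; ring
  smul_mem' := by
    intro c a ha Y hY
    have h1 := ha Y hY
    simp only [finner, Matrix.smul_apply, smul_eq_mul, mul_assoc, ← Finset.mul_sum] at *
    rw [h1]; ring

/-- The tangent space `T = {U Xᵀ + Y Vᵀ}` associated with the reduced SVD `L₀ = U Σ Vᵀ`. -/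
def tangentT {n r : ℕ} (U V : Matrix (Fin n) (Fin r) ℝ) : Submodule ℝ (Mat n) where
  carrier := {A | ∃ X Y : Matrix (Fin n) (Fin r) ℝ, A = U * Xᵀ + Y * Vᵀ}
  zero_mem' := ⟨0, 0, by simp⟩
  add_mem' := by
    rintro a b ⟨X1, Y1, rfl⟩ ⟨X2, Y2, rfl⟩
    exact ⟨X1 + X2, Y1 + Y2, by rw [Matrix.transpose_add, Matrix.mul_add, Matrix.add_mul]; abel⟩
  smul_mem' := by
    rintro c a ⟨X1, Y1, rfl⟩
    exact ⟨c • X1, c • Y1,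
      by rw [Matrix.transpose_smul, Matrix.mul_smul, Matrix.smul_mul, smul_add]⟩

/-- The support subspace `Ω` of `S₀`: matrices vanishing wherever `S₀` vanishes. -/
def suppSub {n : ℕ} (S0 : Mat n) : Submodule ℝ (Mat n) where
  carrier := {X | ∀ i j, S0 i j = 0 → X i j = 0}
  zero_mem' := by intro i j _; rfl
  add_mem' := by
    intro a b ha hb i j h
    simp [Matrix.add_apply, ha i j h, hb i j h]
  smul_mem' := by
    intro c a ha i j h
    simp [Matrix.smul_apply, ha i j h]

/-- Entrywise sign matrix. -/
noncomputable def sgnMat {n : ℕ} (S : Mat n) : Mat n := Matrix.of fun i j => Real.sign (S i j)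

section Sec1
variable {n r : ℕ}

lemma finner_eq_trace (X Y : Mat n) : finner X Y = Matrix.trace (Xᵀ * Y) := by
  simp only [finner, Matrix.trace, Matrix.diag_apply, Matrix.mul_apply, Matrix.transpose_apply]
  rw [Finset.sum_comm]

lemma finner_comm (X Y : Mat n) : finner X Y = finner Y X := by
  simp only [finner]; congr 1; ext i; congr 1; ext j; ring

lemma finner_add_left (X Y Z : Mat n) : finner (X + Y) Z = finner X Z + finner Y Z := by
  simp only [finner, Matrix.add_apply, add_mul, Finset.sum_add_distrib]

lemma finner_add_right (X Y Z : Mat n) : finner X (Y + Z) = finner X Y + finner X Z := by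
  simp only [finner, Matrix.add_apply, mul_add, Finset.sum_add_distrib]

lemma finner_sub_left (X Y Z : Mat n) : finner (X - Y) Z = finner X Z - finner Y Z := by
  simp only [finner, Matrix.sub_apply, sub_mul, Finset.sum_sub_distrib]

lemma finner_sub_right (X Y Z : Mat n) : finner X (Y - Z) = finner X Y - finner X Z := by
  simp only [finner, Matrix.sub_apply, mul_sub, Finset.sum_sub_distrib]

lemma finner_smul_left (c : ℝ) (X Z : Mat n) : finner (c • X) Z = c * finner X Z := by
  simp only [finner, Matrix.smul_apply, smul_eq_mul, Finset.mul_sum, mul_assoc]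

lemma finner_smul_right (c : ℝ) (X Z : Mat n) : finner X (c • Z) = c * finner X Z := by
  rw [finner_comm, finner_smul_left, finner_comm]

@[simp] lemma finner_zero_left (Z : Mat n) : finner 0 Z = 0 := by simp [finner]
@[simp] lemma finner_zero_right (Z : Mat n) : finner Z 0 = 0 := by simp [finner]

lemma finner_self_nonneg (X : Mat n) : 0 ≤ finner X X := by
  apply Finset.sum_nonneg; intro i _; apply Finset.sum_nonneg; intro j _; exact mul_self_nonneg _

lemma fnorm_nonneg (X : Mat n) : 0 ≤ fnorm X := Real.sqrt_nonneg _

lemma fnorm_sq (X : Mat n) : fnorm X ^ 2 = finner X X := by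
  rw [fnorm, Real.sq_sqrt (finner_self_nonneg X)]

lemma finner_self_eq_zero {X : Mat n} (h : finner X X = 0) : X = 0 := by
  ext i j
  have h2 : ∀ i ∈ Finset.univ, ∑ j, X i j * X i j = 0 := by
    intro i _
    have := (Finset.sum_eq_zero_iff_of_nonneg (fun i _ => Finset.sum_nonneg
      (fun j _ => mul_self_nonneg (X i j)))).mp h
    exact this i (Finset.mem_univ i)
  have h3 := (Finset.sum_eq_zero_iff_of_nonneg
    (fun j _ => mul_self_nonneg (X i j))).mp (h2 i (Finset.mem_univ i)) j (Finset.mem_univ j)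
  exact mul_self_eq_zero.mp h3

lemma fnorm_eq_zero_iff {X : Mat n} : fnorm X = 0 ↔ X = 0 := by
  constructor
  · intro h
    apply finner_self_eq_zero
    have h2 : fnorm X ^ 2 = 0 := by rw [h]; norm_num
    rw [fnorm_sq] at h2; exact h2
  · rintro rfl; simp [fnorm, finner]

lemma finner_le_fnorm_mul_fnorm (X Y : Mat n) : finner X Y ≤ fnorm X * fnorm Y := by
  have key : finner X Y ^ 2 ≤ finner X X * finner Y Y := by
    have h := Finset.sum_mul_sq_le_sq_mul_sq Finset.univ
      (fun p : Fin n × Fin n => X p.1 p.2) (fun p => Y p.1 p.2)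
    simpa only [finner, ← Finset.sum_product', Fintype.sum_prod_type, sq] using h
  have h1 : fnorm X * fnorm Y = Real.sqrt (finner X X * finner Y Y) := by
    rw [fnorm, fnorm, Real.sqrt_mul (finner_self_nonneg X)]
  rw [h1]
  calc finner X Y ≤ |finner X Y| := le_abs_self _
    _ = Real.sqrt (finner X Y ^ 2) := (Real.sqrt_sq_eq_abs _).symm
    _ ≤ Real.sqrt (finner X X * finner Y Y) := Real.sqrt_le_sqrt key

lemma fnorm_add_le (X Y : Mat n) : fnorm (X + Y) ≤ fnorm X + fnorm Y := by
  have h0 : 0 ≤ fnorm X + fnorm Y := add_nonneg (fnorm_nonneg X) (fnorm_nonneg Y)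
  have hsq : fnorm (X + Y) ^ 2 ≤ (fnorm X + fnorm Y) ^ 2 := by
    rw [fnorm_sq]
    have : finner (X + Y) (X + Y)
        = finner X X + 2 * finner X Y + finner Y Y := by
      rw [finner_add_left, finner_add_right, finner_add_right, finner_comm Y X]; ring
    rw [this]
    have := finner_le_fnorm_mul_fnorm X Y
    nlinarith [fnorm_sq X, fnorm_sq Y]
  nlinarith [fnorm_nonneg (X + Y)]

lemma fnorm_smul (c : ℝ) (X : Mat n) : fnorm (c • X) = |c| * fnorm X := by
  rw [fnorm, finner_smul_left, finner_smul_right, ← mul_assoc, fnorm,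
    Real.sqrt_mul (mul_self_nonneg c), ← Real.sqrt_mul_self_eq_abs]

lemma finner_mul_left (A : Matrix (Fin n) (Fin n) ℝ) (B C : Mat n) :
    finner (A * B) C = finner B (Aᵀ * C) := by
  rw [finner_eq_trace, finner_eq_trace, Matrix.transpose_mul, Matrix.mul_assoc]

lemma finner_mul_right (A : Matrix (Fin n) (Fin n) ℝ) (B C : Mat n) :
    finner (B * A) C = finner B (C * Aᵀ) := by
  rw [finner_eq_trace, finner_eq_trace, Matrix.transpose_mul, Matrix.mul_assoc,
    Matrix.trace_mul_comm, Matrix.mul_assoc]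

lemma finner_vecMulVec_left (a b : Fin n → ℝ) (Z : Mat n) :
    finner (Matrix.vecMulVec a b) Z = a ⬝ᵥ Z.mulVec b := by
  simp only [finner, Matrix.vecMulVec_apply, dotProduct, Matrix.mulVec, Finset.mul_sum]
  congr 1; ext i; congr 1; ext j; ring

lemma finner_vecMulVec_vecMulVec (a b c e : Fin n → ℝ) :
    finner (Matrix.vecMulVec a b) (Matrix.vecMulVec c e) = (a ⬝ᵥ c) * (b ⬝ᵥ e) := by
  simp only [finner, Matrix.vecMulVec_apply, dotProduct, Finset.sum_mul_sum]
  congr 1; ext i; congr 1; ext j; ring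

end Sec1
section Sec2
variable {n : ℕ}

lemma mem_orthComp_iff {V : Submodule ℝ (Mat n)} {X : Mat n} :
    X ∈ orthComp V ↔ ∀ Y ∈ V, finner X Y = 0 := Iff.rfl

namespace IsOrthProj

variable {V : Submodule ℝ (Mat n)} {P : Mat n →ₗ[ℝ] Mat n}

lemma proj_perp (hP : IsOrthProj V P) (X : Mat n) : X - P X ∈ orthComp V := by
  intro Y hY; exact hP.2.2 X Y hY

lemma finner_eq_proj_proj (hP : IsOrthProj V P) (X Y : Mat n) :
    finner (P X) Y = finner (P X) (P Y) := by
  have h := hP.2.2 Y (P X) (hP.1 X)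
  rw [finner_sub_left] at h
  rw [finner_comm (P X) Y, finner_comm (P X) (P Y)]
  linarith

lemma selfAdjoint (hP : IsOrthProj V P) (X Y : Mat n) :
    finner (P X) Y = finner X (P Y) := by
  rw [hP.finner_eq_proj_proj X Y, finner_comm, ← hP.finner_eq_proj_proj Y X, finner_comm]

lemma idem (hP : IsOrthProj V P) (X : Mat n) : P (P X) = P X := hP.2.1 _ (hP.1 X)

lemma fnorm_proj_le (hP : IsOrthProj V P) (X : Mat n) : fnorm (P X) ≤ fnorm X := by
  have key : finner (P X) (P X) ≤ finner X X := by
    have hd : finner (X - P X) (P X) = 0 := hP.2.2 X (P X) (hP.1 X)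
    have hexp : finner X X =
        finner (P X) (P X) + 2 * finner (X - P X) (P X) + finner (X - P X) (X - P X) := by
      have hX : X = P X + (X - P X) := by abel
      calc finner X X = finner (P X + (X - P X)) (P X + (X - P X)) := by rw [← hX]
        _ = _ := by
            rw [finner_add_left, finner_add_right, finner_add_right,
              finner_comm (P X) (X - P X)]
            ring
    have := finner_self_nonneg (X - P X)
    rw [hexp, hd]; linarith
  exact Real.sqrt_le_sqrt key

lemma proj_eq_zero_of_perp (hP : IsOrthProj V P) {X : Mat n} (hX : X ∈ orthComp V) :
    P X = 0 := by
  apply finner_self_eq_zero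
  have h1 : finner X (P X) = 0 := hX (P X) (hP.1 X)
  have h2 : finner (X - P X) (P X) = 0 := hP.2.2 X (P X) (hP.1 X)
  rw [finner_sub_left] at h2
  linarith

lemma unique {P' : Mat n →ₗ[ℝ] Mat n} (hP : IsOrthProj V P) (hP' : IsOrthProj V P') :
    P = P' := by
  ext X : 1
  have hmem : P X - P' X ∈ V := V.sub_mem (hP.1 X) (hP'.1 X)
  have h1 : finner (X - P X) (P X - P' X) = 0 := hP.2.2 X _ hmem
  have h2 : finner (X - P' X) (P X - P' X) = 0 := hP'.2.2 X _ hmem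
  have h3 : finner (P X - P' X) (P X - P' X) = 0 := by
    have e : (P X - P' X) = (X - P' X) - (X - P X) := by abel
    nth_rewrite 1 [e]
    rw [finner_sub_left, h1, h2]; ring
  have := finner_self_eq_zero h3
  exact sub_eq_zero.mp this

end IsOrthProj

/-- The matrix-to-Euclidean-space linear equivalence. -/
noncomputable def matEuc (n : ℕ) : Mat n ≃ₗ[ℝ] EuclideanSpace ℝ (Fin n × Fin n) :=
  { toFun := fun X => (WithLp.equiv 2 _).symm (fun p : Fin n × Fin n => X p.1 p.2)
    invFun := fun f => Matrix.of fun i j => f (i, j)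
    map_add' := by intro X Y; rfl
    map_smul' := by intro c X; rfl
    left_inv := by intro X; rfl
    right_inv := by intro f; rfl }

lemma finner_eq_inner (X Y : Mat n) :
    finner X Y = (inner ℝ (matEuc n X) (matEuc n Y) : ℝ) := by
  rw [PiLp.inner_apply]
  simp only [finner, RCLike.inner_apply, conj_trivial]
  rw [← Finset.sum_product']
  simp [matEuc, Fintype.sum_prod_type, mul_comm]

lemma orthComp_eq_comap (V : Submodule ℝ (Mat n)) :
    orthComp V = (V.map (matEuc n).toLinearMap)ᗮ.comap (matEuc n).toLinearMap := by
  ext X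
  simp only [mem_orthComp_iff, Submodule.mem_comap, Submodule.mem_orthogonal]
  constructor
  · rintro h _ ⟨Y, hY, rfl⟩
    rw [LinearEquiv.coe_coe, real_inner_comm, ← finner_eq_inner]
    exact h Y hY
  · intro h Y hY
    rw [finner_eq_inner]
    rw [real_inner_comm]
    exact h _ (Submodule.mem_map_of_mem hY)

lemma matEuc_map_comap (K : Submodule ℝ (EuclideanSpace ℝ (Fin n × Fin n))) :
    Submodule.map (matEuc n).toLinearMap (Submodule.comap (matEuc n).toLinearMap K) = K := by
  rw [Submodule.map_comap_eq, LinearEquiv.range]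
  exact top_inf_eq K

lemma matEuc_comap_map (K : Submodule ℝ (Mat n)) :
    Submodule.comap (matEuc n).toLinearMap (Submodule.map (matEuc n).toLinearMap K) = K := by
  exact Submodule.comap_map_eq_of_injective (matEuc n).injective K

lemma orthComp_orthComp (V : Submodule ℝ (Mat n)) : orthComp (orthComp V) = V := by
  rw [orthComp_eq_comap, orthComp_eq_comap, matEuc_map_comap,
    Submodule.orthogonal_orthogonal, matEuc_comap_map]

lemma orthComp_anti {V W : Submodule ℝ (Mat n)} (h : V ≤ W) : orthComp W ≤ orthComp V :=
  fun X hX Y hY => hX Y (h hY)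

end Sec2
section Sec3
variable {n : ℕ}

lemma dot_self_nonneg (u : Fin n → ℝ) : 0 ≤ u ⬝ᵥ u :=
  Finset.sum_nonneg fun i _ => mul_self_nonneg (u i)

lemma dot_self_eq_zero' {u : Fin n → ℝ} (h : u ⬝ᵥ u = 0) : u = 0 := by
  funext i
  have := (Finset.sum_eq_zero_iff_of_nonneg
    (fun j _ => mul_self_nonneg (u j))).mp h i (Finset.mem_univ i)
  exact mul_self_eq_zero.mp this

lemma dot_cs (u v : Fin n → ℝ) : u ⬝ᵥ v ≤ Real.sqrt (u ⬝ᵥ u) * Real.sqrt (v ⬝ᵥ v) := by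
  have key := Finset.sum_mul_sq_le_sq_mul_sq Finset.univ u v
  rw [← Real.sqrt_mul (dot_self_nonneg u)]
  calc u ⬝ᵥ v ≤ |u ⬝ᵥ v| := le_abs_self _
    _ = Real.sqrt ((u ⬝ᵥ v) ^ 2) := (Real.sqrt_sq_eq_abs _).symm
    _ ≤ _ := Real.sqrt_le_sqrt (by simpa [dotProduct, sq] using key)

/-- Euclidean-space version of a plain vector. -/
noncomputable def euv {n : ℕ} (u : Fin n → ℝ) : EuclideanSpace ℝ (Fin n) :=
  (WithLp.equiv 2 _).symm u

lemma euv_norm (u : Fin n → ℝ) : ‖euv u‖ = Real.sqrt (u ⬝ᵥ u) := by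
  rw [EuclideanSpace.norm_eq]
  congr 1
  simp [euv, dotProduct, sq, abs_mul_abs_self]

lemma toCLM_euv (Z : Mat n) (v : Fin n → ℝ) :
    Matrix.toEuclideanCLM (𝕜 := ℝ) Z (euv v) = euv (Z *ᵥ v) := by
  rw [euv, WithLp.equiv_symm_apply, Matrix.toEuclideanCLM_toLp]; rfl

lemma inner_euv (u v : Fin n → ℝ) : (inner ℝ (euv u) (euv v) : ℝ) = u ⬝ᵥ v := by
  rw [PiLp.inner_apply]
  simp [euv, dotProduct, mul_comm]

lemma specNorm_nonneg (Z : Mat n) : 0 ≤ specNorm Z := norm_nonneg _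

lemma dot_mulVec_le (Z : Mat n) (u v : Fin n → ℝ) :
    u ⬝ᵥ Z *ᵥ v ≤ specNorm Z * (Real.sqrt (u ⬝ᵥ u) * Real.sqrt (v ⬝ᵥ v)) := by
  have h1 : u ⬝ᵥ Z *ᵥ v = (inner ℝ (euv u) (Matrix.toEuclideanCLM (𝕜 := ℝ) Z (euv v)) : ℝ) := by
    rw [toCLM_euv, inner_euv]
  rw [h1]
  calc (inner ℝ (euv u) (Matrix.toEuclideanCLM (𝕜 := ℝ) Z (euv v)) : ℝ)
      ≤ ‖euv u‖ * ‖Matrix.toEuclideanCLM (𝕜 := ℝ) Z (euv v)‖ := real_inner_le_norm _ _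
    _ ≤ ‖euv u‖ * (specNorm Z * ‖euv v‖) := by
        apply mul_le_mul_of_nonneg_left _ (norm_nonneg _)
        exact (Matrix.toEuclideanCLM (𝕜 := ℝ) Z).le_opNorm (euv v)
    _ = specNorm Z * (Real.sqrt (u ⬝ᵥ u) * Real.sqrt (v ⬝ᵥ v)) := by
        rw [euv_norm, euv_norm]; ring

lemma specNorm_le_of_mulVec_le {Z : Mat n} {c : ℝ} (hc : 0 ≤ c)
    (h : ∀ v : Fin n → ℝ, Real.sqrt (Z *ᵥ v ⬝ᵥ Z *ᵥ v) ≤ c * Real.sqrt (v ⬝ᵥ v)) :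
    specNorm Z ≤ c := by
  apply ContinuousLinearMap.opNorm_le_bound _ hc
  intro x
  have hx : x = euv (WithLp.equiv 2 _ x) := rfl
  rw [hx, toCLM_euv, euv_norm, euv_norm]
  exact h _

lemma transpose_mul_self_idem_specNorm_le {G : Mat n}
    (h : (Gᵀ * G) * (Gᵀ * G) = Gᵀ * G) : specNorm G ≤ 1 := by
  set M := Gᵀ * G with hMdef
  have hsym : Mᵀ = M := by rw [hMdef, Matrix.transpose_mul, Matrix.transpose_transpose]
  have key : ∀ v : Fin n → ℝ, (G *ᵥ v) ⬝ᵥ (G *ᵥ v) = v ⬝ᵥ (M *ᵥ v) := by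
    intro v
    calc (G *ᵥ v) ⬝ᵥ (G *ᵥ v) = (v ᵥ* Gᵀ) ⬝ᵥ (G *ᵥ v) := by rw [Matrix.vecMul_transpose]
      _ = v ⬝ᵥ (Gᵀ *ᵥ (G *ᵥ v)) := (Matrix.dotProduct_mulVec v Gᵀ _).symm
      _ = v ⬝ᵥ (M *ᵥ v) := by rw [Matrix.mulVec_mulVec]
  have hM : ∀ v : Fin n → ℝ, (M *ᵥ v) ⬝ᵥ (M *ᵥ v) = v ⬝ᵥ (M *ᵥ v) := by
    intro v
    calc (M *ᵥ v) ⬝ᵥ (M *ᵥ v) = (v ᵥ* Mᵀ) ⬝ᵥ (M *ᵥ v) := by rw [Matrix.vecMul_transpose]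
      _ = v ⬝ᵥ (Mᵀ *ᵥ (M *ᵥ v)) := (Matrix.dotProduct_mulVec v Mᵀ _).symm
      _ = v ⬝ᵥ ((Mᵀ * M) *ᵥ v) := by rw [Matrix.mulVec_mulVec]
      _ = v ⬝ᵥ (M *ᵥ v) := by rw [hsym, h]
  apply specNorm_le_of_mulVec_le zero_le_one
  intro v
  rw [one_mul]
  have hMle : Real.sqrt ((M *ᵥ v) ⬝ᵥ (M *ᵥ v)) ≤ Real.sqrt (v ⬝ᵥ v) := by
    have hcs : v ⬝ᵥ (M *ᵥ v) ≤ Real.sqrt (v ⬝ᵥ v) * Real.sqrt ((M *ᵥ v) ⬝ᵥ (M *ᵥ v)) :=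
      dot_cs v (M *ᵥ v)
    have ht : Real.sqrt ((M *ᵥ v) ⬝ᵥ (M *ᵥ v)) ^ 2 = (M *ᵥ v) ⬝ᵥ (M *ᵥ v) :=
      Real.sq_sqrt (dot_self_nonneg _)
    nlinarith [Real.sqrt_nonneg ((M *ᵥ v) ⬝ᵥ (M *ᵥ v)), Real.sqrt_nonneg (v ⬝ᵥ v),
      hM v]
  calc Real.sqrt ((G *ᵥ v) ⬝ᵥ (G *ᵥ v)) = Real.sqrt ((M *ᵥ v) ⬝ᵥ (M *ᵥ v)) := by
        rw [key, hM]
    _ ≤ Real.sqrt (v ⬝ᵥ v) := hMle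

end Sec3
section Sec4
variable {n : ℕ}

lemma mul_vecMulVec (X : Mat n) (a b : Fin n → ℝ) :
    X * Matrix.vecMulVec a b = Matrix.vecMulVec (X *ᵥ a) b := by
  ext i j
  simp [Matrix.mul_apply, Matrix.vecMulVec_apply, Matrix.mulVec, dotProduct,
    Finset.sum_mul, mul_assoc]

lemma vecMulVec_transpose (a b : Fin n → ℝ) :
    (Matrix.vecMulVec a b)ᵀ = Matrix.vecMulVec b a := by
  ext i j; simp [Matrix.vecMulVec_apply, mul_comm]

lemma vecMulVec_mul_vecMulVec (a b c e : Fin n → ℝ) :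
    Matrix.vecMulVec a b * Matrix.vecMulVec c e = (b ⬝ᵥ c) • Matrix.vecMulVec a e := by
  ext i j
  simp only [Matrix.mul_apply, Matrix.vecMulVec_apply, Matrix.smul_apply, smul_eq_mul,
    dotProduct, Finset.sum_mul, Finset.mul_sum]
  exact Finset.sum_congr rfl (fun k _ => by ring)

lemma smul_vecMulVec_left (c : ℝ) (a b : Fin n → ℝ) :
    Matrix.vecMulVec (c • a) b = c • Matrix.vecMulVec a b := by
  ext i j; simp [Matrix.vecMulVec_apply, mul_assoc]

/-- Packaged singular value decomposition. -/
lemma svd_exists (X : Mat n) : ∃ (σ : Fin n → ℝ) (u v : Fin n → (Fin n → ℝ)),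
    (∀ i, 0 ≤ σ i) ∧
    nucNorm X = ∑ i, σ i ∧
    X = ∑ i, Matrix.vecMulVec (σ i • u i) (v i) ∧
    (∀ i j, u i ⬝ᵥ u j = if i = j ∧ σ i ≠ 0 then 1 else 0) ∧
    (∀ i j, v i ⬝ᵥ v j = if i = j then 1 else 0) ∧
    (∀ i, σ i ≠ 0 → Xᵀ *ᵥ u i = σ i • v i) ∧
    (∀ i, X *ᵥ v i = σ i • u i) ∧
    (∀ i, σ i = 0 → u i = 0) := by
  classical
  set hX := Matrix.isHermitian_conjTranspose_mul_self X with hXdef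
  set e := hX.eigenvalues with hedef
  have hconj : Xᴴ = Xᵀ := Matrix.conjTranspose_eq_transpose_of_trivial X
  have he : ∀ i, 0 ≤ e i := fun i =>
    (Matrix.posSemidef_conjTranspose_mul_self X).eigenvalues_nonneg i
  set v : Fin n → (Fin n → ℝ) := fun i => ⇑(hX.eigenvectorBasis i) with hvdef
  have heig : ∀ i, (Xᵀ * X) *ᵥ v i = e i • v i := by
    intro i
    rw [← hconj]
    exact hX.mulVec_eigenvectorBasis i
  have hv : ∀ i j, v i ⬝ᵥ v j = if i = j then 1 else 0 := by
    intro i j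
    have horth := hX.eigenvectorBasis.orthonormal
    rw [orthonormal_iff_ite] at horth
    have := horth i j
    rw [← this]
    exact (inner_euv (v i) (v j)).symm
  have hXv : ∀ i j, (X *ᵥ v i) ⬝ᵥ (X *ᵥ v j) = if i = j then e i else 0 := by
    intro i j
    calc (X *ᵥ v i) ⬝ᵥ (X *ᵥ v j) = (v i ᵥ* Xᵀ) ⬝ᵥ (X *ᵥ v j) := by
          rw [Matrix.vecMul_transpose]
      _ = v i ⬝ᵥ (Xᵀ *ᵥ (X *ᵥ v j)) := (Matrix.dotProduct_mulVec _ _ _).symm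
      _ = v i ⬝ᵥ ((Xᵀ * X) *ᵥ v j) := by rw [Matrix.mulVec_mulVec]
      _ = v i ⬝ᵥ (e j • v j) := by rw [heig]
      _ = e j * (v i ⬝ᵥ v j) := by rw [dotProduct_smul]; rfl
      _ = if i = j then e i else 0 := by
          rw [hv]
          by_cases h : i = j
          · subst h; simp
          · simp [h]
  have hXv0 : ∀ i, e i = 0 → X *ᵥ v i = 0 := by
    intro i h0
    apply dot_self_eq_zero'
    rw [hXv i i]; simp [h0]
  set σ : Fin n → ℝ := fun i => Real.sqrt (e i) with hσdef
  have hσ : ∀ i, 0 ≤ σ i := fun i => Real.sqrt_nonneg _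
  have hσsq : ∀ i, σ i * σ i = e i := fun i => Real.mul_self_sqrt (he i)
  have hσ0 : ∀ i, σ i = 0 → e i = 0 := by
    intro i h0
    rw [← hσsq i, h0, mul_zero]
  set u : Fin n → (Fin n → ℝ) := fun i => (σ i)⁻¹ • (X *ᵥ v i) with hudef
  have huz : ∀ i, σ i = 0 → u i = 0 := by
    intro i h0
    rw [hudef]
    simp only
    rw [hXv0 i (hσ0 i h0), smul_zero]
  have hXvu : ∀ i, X *ᵥ v i = σ i • u i := by
    intro i
    by_cases h0 : σ i = 0
    · rw [hXv0 i (hσ0 i h0), huz i h0, smul_zero]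
    · rw [hudef]
      simp only
      rw [smul_smul, mul_inv_cancel₀ h0, one_smul]
  have hu : ∀ i j, u i ⬝ᵥ u j = if i = j ∧ σ i ≠ 0 then 1 else 0 := by
    intro i j
    rw [hudef]
    simp only
    rw [smul_dotProduct, dotProduct_smul, hXv i j]
    by_cases h : i = j
    · subst h
      by_cases h0 : σ i = 0
      · rw [if_pos rfl, if_neg (by simp [h0])]
        rw [hσ0 i h0]
        simp
      · rw [if_pos rfl, if_pos ⟨rfl, h0⟩, smul_eq_mul, smul_eq_mul, ← hσsq i]
        field_simp
    · simp [h]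
  have hXtu : ∀ i, σ i ≠ 0 → Xᵀ *ᵥ u i = σ i • v i := by
    intro i h0
    rw [hudef]
    simp only
    rw [Matrix.mulVec_smul, Matrix.mulVec_mulVec, heig i, smul_smul]
    congr 1
    rw [← hσsq i]
    field_simp
  -- completeness
  have hcomp : ∑ i, Matrix.vecMulVec (v i) (v i) = (1 : Mat n) := by
    set B : Mat n := Matrix.of (fun j i => v i j) with hBdef
    have hBtB : Bᵀ * B = 1 := by
      ext i j
      simp only [Matrix.mul_apply, Matrix.transpose_apply, hBdef, Matrix.of_apply,
        Matrix.one_apply]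
      exact hv i j
    have hBBt : B * Bᵀ = 1 := mul_eq_one_comm.mp hBtB
    calc ∑ i, Matrix.vecMulVec (v i) (v i) = B * Bᵀ := by
          ext j k
          simp [Matrix.sum_apply, Matrix.vecMulVec_apply, Matrix.mul_apply, hBdef]
      _ = 1 := hBBt
  have hdecomp : X = ∑ i, Matrix.vecMulVec (σ i • u i) (v i) := by
    have : ∑ i, Matrix.vecMulVec (σ i • u i) (v i)
        = ∑ i, X * Matrix.vecMulVec (v i) (v i) := by
      apply Finset.sum_congr rfl
      intro i _
      rw [mul_vecMulVec, hXvu i]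
    rw [this, ← Finset.mul_sum, hcomp, mul_one]
  exact ⟨σ, u, v, hσ, rfl, hdecomp, hu, hv, hXtu, hXvu, huz⟩

end Sec4
section Sec5
variable {n : ℕ}

lemma finner_sum_left {ι : Type*} (s : Finset ι) (f : ι → Mat n) (Z : Mat n) :
    finner (∑ i ∈ s, f i) Z = ∑ i ∈ s, finner (f i) Z := by
  classical
  induction s using Finset.induction with
  | empty => simp
  | insert _ _ hx ih => rw [Finset.sum_insert hx, Finset.sum_insert hx, finner_add_left, ih]

lemma finner_sum_right {ι : Type*} (s : Finset ι) (f : ι → Mat n) (Z : Mat n) :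
    finner Z (∑ i ∈ s, f i) = ∑ i ∈ s, finner Z (f i) := by
  rw [finner_comm, finner_sum_left]
  exact Finset.sum_congr rfl (fun i _ => finner_comm _ _)

lemma nucNorm_nonneg (X : Mat n) : 0 ≤ nucNorm X :=
  Finset.sum_nonneg fun i _ => Real.sqrt_nonneg _

/-- Trace duality: `⟨X, Z⟩ ≤ ‖X‖_* ‖Z‖`. -/
lemma finner_le_nucNorm_mul_specNorm (X Z : Mat n) :
    finner X Z ≤ nucNorm X * specNorm Z := by
  obtain ⟨σ, u, v, hσ, hnuc, hdecomp, hu, hv, _, _, _⟩ := svd_exists X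
  calc finner X Z = ∑ i, finner (Matrix.vecMulVec (σ i • u i) (v i)) Z := by
        rw [← finner_sum_left, ← hdecomp]
    _ = ∑ i, σ i * (u i ⬝ᵥ Z *ᵥ v i) := by
        apply Finset.sum_congr rfl; intro i _
        rw [finner_vecMulVec_left, smul_dotProduct]; rfl
    _ ≤ ∑ i, σ i * specNorm Z := by
        apply Finset.sum_le_sum; intro i _
        apply mul_le_mul_of_nonneg_left _ (hσ i)
        calc u i ⬝ᵥ Z *ᵥ v i
            ≤ specNorm Z * (Real.sqrt (u i ⬝ᵥ u i) * Real.sqrt (v i ⬝ᵥ v i)) :=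
              dot_mulVec_le Z (u i) (v i)
          _ ≤ specNorm Z * 1 := by
              apply mul_le_mul_of_nonneg_left _ (specNorm_nonneg Z)
              rw [hv i i, if_pos rfl, Real.sqrt_one, mul_one, hu i i]
              by_cases h0 : σ i = 0 <;> simp [h0]
          _ = specNorm Z := mul_one _
    _ = nucNorm X * specNorm Z := by rw [← Finset.sum_mul, hnuc]

lemma fnorm_le_nucNorm (X : Mat n) : fnorm X ≤ nucNorm X := by
  obtain ⟨σ, u, v, hσ, hnuc, hdecomp, hu, hv, _, _, _⟩ := svd_exists X
  have hXX : finner X X ≤ (∑ i, σ i) ^ 2 := by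
    have step : finner X X = ∑ i, σ i * σ i * (u i ⬝ᵥ u i) := by
      rw [hdecomp, finner_sum_left]
      apply Finset.sum_congr rfl; intro i _
      rw [finner_sum_right]
      rw [Finset.sum_eq_single i]
      · rw [finner_vecMulVec_vecMulVec, smul_dotProduct, dotProduct_smul,
          hv i i, if_pos rfl, mul_one, smul_eq_mul, smul_eq_mul]
        ring
      · intro j _ hji
        rw [finner_vecMulVec_vecMulVec, hv i j, if_neg (fun hh => hji hh.symm), mul_zero]
      · intro h; exact absurd (Finset.mem_univ i) h
    rw [step]
    have h1 : ∑ i, σ i * σ i * (u i ⬝ᵥ u i) ≤ ∑ i, σ i ^ 2 := by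
      apply Finset.sum_le_sum; intro i _
      rw [hu i i]
      by_cases h0 : σ i = 0 <;> simp [h0, sq] <;> nlinarith [hσ i]
    have h2 : ∑ i, σ i ^ 2 ≤ (∑ i, σ i) ^ 2 :=
      Finset.sum_sq_le_sq_sum_of_nonneg (fun i _ => hσ i)
    linarith
  rw [fnorm, ← hnuc] at *
  calc Real.sqrt (finner X X) ≤ Real.sqrt ((nucNorm X) ^ 2) := Real.sqrt_le_sqrt hXX
    _ = |nucNorm X| := Real.sqrt_sq_eq_abs _
    _ = nucNorm X := abs_of_nonneg (nucNorm_nonneg X)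

lemma mul_vecMulVec' {m : ℕ} (A : Matrix (Fin m) (Fin n) ℝ) (a b : Fin n → ℝ) :
    A * Matrix.vecMulVec a b = Matrix.vecMulVec (A *ᵥ a) b := by
  ext i j
  simp [Matrix.mul_apply, Matrix.vecMulVec_apply, Matrix.mulVec, dotProduct,
    Finset.sum_mul, mul_assoc]

lemma vecMulVec_mul' {m : ℕ} (a b : Fin n → ℝ) (C : Matrix (Fin n) (Fin m) ℝ) :
    Matrix.vecMulVec a b * C = Matrix.vecMulVec a (Cᵀ *ᵥ b) := by
  ext i j
  simp only [Matrix.mul_apply, Matrix.vecMulVec_apply, Matrix.mulVec, dotProduct,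
    Matrix.transpose_apply, Finset.mul_sum]
  exact Finset.sum_congr rfl (fun k _ => by ring)

@[simp] lemma vecMulVec_zero_left {m : ℕ} (b : Fin m → ℝ) :
    Matrix.vecMulVec (0 : Fin n → ℝ) b = 0 := by
  ext i j; simp [Matrix.vecMulVec_apply]

@[simp] lemma vecMulVec_zero_right {m : ℕ} (a : Fin n → ℝ) :
    Matrix.vecMulVec a (0 : Fin m → ℝ) = 0 := by
  ext i j; simp [Matrix.vecMulVec_apply]

/-- Dual certificate for the nuclear norm, with range/corange control. -/
lemma exists_dual (X : Mat n) : ∃ W0 : Mat n,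
    finner X W0 = nucNorm X ∧
    specNorm W0 ≤ 1 ∧
    (W0ᵀ * W0) * (W0ᵀ * W0) = W0ᵀ * W0 ∧
    (∀ {m : ℕ} (A : Matrix (Fin m) (Fin n) ℝ), A * X = 0 → A * W0 = 0) ∧
    (∀ {m : ℕ} (C : Matrix (Fin n) (Fin m) ℝ), X * C = 0 → W0 * C = 0 ∧ (W0ᵀ * W0) * C = 0) := by
  classical
  obtain ⟨σ, u, v, hσ, hnuc, hdecomp, hu, hv, hXtu, hXvu, huz⟩ := svd_exists X
  set W0 : Mat n := ∑ i, Matrix.vecMulVec (u i) (v i) with hW0def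
  set c : Fin n → ℝ := fun i => u i ⬝ᵥ u i with hcdef
  have hc01 : ∀ i, c i = 0 ∨ c i = 1 := by
    intro i
    rw [hcdef]; simp only [hu i i]
    by_cases h0 : σ i = 0
    · left; simp [h0]
    · right; simp [h0]
  have hcz : ∀ i, σ i = 0 → c i = 0 := by
    intro i h0; rw [hcdef]; simp only [hu i i]; simp [h0]
  have hW0t : W0ᵀ = ∑ i, Matrix.vecMulVec (v i) (u i) := by
    rw [hW0def, Matrix.transpose_sum]
    exact Finset.sum_congr rfl (fun i _ => vecMulVec_transpose _ _)
  have hPv : W0ᵀ * W0 = ∑ i, c i • Matrix.vecMulVec (v i) (v i) := by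
    rw [hW0t, hW0def, Finset.sum_mul_sum]
    apply Finset.sum_congr rfl; intro i _
    rw [Finset.sum_eq_single i]
    · rw [vecMulVec_mul_vecMulVec]
    · intro j _ hji
      rw [vecMulVec_mul_vecMulVec, hu i j, if_neg (fun hh => hji hh.1.symm), zero_smul]
    · intro h; exact absurd (Finset.mem_univ i) h
  have hidem : (W0ᵀ * W0) * (W0ᵀ * W0) = W0ᵀ * W0 := by
    rw [hPv, Finset.sum_mul_sum]
    apply Finset.sum_congr rfl; intro i _
    rw [Finset.sum_eq_single i]
    · rw [smul_mul_assoc, mul_smul_comm, vecMulVec_mul_vecMulVec, hv i i, if_pos rfl,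
        one_smul, smul_smul]
      rcases hc01 i with h | h <;> rw [h] <;> norm_num
    · intro j _ hji
      rw [smul_mul_assoc, mul_smul_comm, vecMulVec_mul_vecMulVec, hv i j,
        if_neg (fun hh => hji hh.symm), zero_smul, smul_zero, smul_zero]
    · intro h; exact absurd (Finset.mem_univ i) h
  have hAW0 : ∀ {m : ℕ} (A : Matrix (Fin m) (Fin n) ℝ), A * X = 0 → A * W0 = 0 := by
    intro m A hAX
    have hAu : ∀ i, A *ᵥ u i = 0 := by
      intro i
      by_cases h0 : σ i = 0
      · rw [huz i h0, Matrix.mulVec_zero]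
      · have h1 : A *ᵥ (X *ᵥ v i) = 0 := by
          rw [Matrix.mulVec_mulVec, hAX, Matrix.zero_mulVec]
        rw [hXvu i, Matrix.mulVec_smul] at h1
        rcases smul_eq_zero.mp h1 with h | h
        · exact absurd h h0
        · exact h
    rw [hW0def, Matrix.mul_sum]
    apply Finset.sum_eq_zero; intro i _
    rw [mul_vecMulVec', hAu i, vecMulVec_zero_left]
  have hCv : ∀ {m : ℕ} (C : Matrix (Fin n) (Fin m) ℝ), X * C = 0 →
      ∀ i, σ i ≠ 0 → Cᵀ *ᵥ v i = 0 := by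
    intro m C hXC i h0
    have h1 : Cᵀ *ᵥ (Xᵀ *ᵥ u i) = 0 := by
      rw [Matrix.mulVec_mulVec, ← Matrix.transpose_mul, hXC, Matrix.transpose_zero,
        Matrix.zero_mulVec]
    rw [hXtu i h0, Matrix.mulVec_smul] at h1
    rcases smul_eq_zero.mp h1 with h | h
    · exact absurd h h0
    · exact h
  refine ⟨W0, ?_, ?_, hidem, hAW0, ?_⟩
  · rw [hW0def]
    nth_rewrite 1 [hdecomp]
    rw [finner_sum_left]
    rw [hnuc]
    apply Finset.sum_congr rfl; intro i _
    rw [finner_sum_right, Finset.sum_eq_single i]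
    · rw [finner_vecMulVec_vecMulVec, hv i i, if_pos rfl, mul_one, smul_dotProduct,
        smul_eq_mul, hu i i]
      by_cases h0 : σ i = 0
      · simp [h0]
      · simp [h0]
    · intro j _ hji
      rw [finner_vecMulVec_vecMulVec, hv i j, if_neg (fun hh => hji hh.symm), mul_zero]
    · intro h; exact absurd (Finset.mem_univ i) h
  · exact transpose_mul_self_idem_specNorm_le hidem
  · intro m C hXC
    constructor
    · rw [hW0def, Matrix.sum_mul]
      apply Finset.sum_eq_zero; intro i _
      by_cases h0 : σ i = 0
      · rw [huz i h0, vecMulVec_zero_left, Matrix.zero_mul]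
      · rw [vecMulVec_mul', hCv C hXC i h0, vecMulVec_zero_right]
    · rw [hPv, Matrix.sum_mul]
      apply Finset.sum_eq_zero; intro i _
      by_cases h0 : σ i = 0
      · rw [hcz i h0, zero_smul, Matrix.zero_mul]
      · rw [Matrix.smul_mul, vecMulVec_mul', hCv C hXC i h0, vecMulVec_zero_right, smul_zero]

end Sec5
section Sec6
variable {n r : ℕ}

@[simp] lemma fnorm_zero : fnorm (0 : Mat n) = 0 := by
  simp [fnorm, finner]

lemma finner_UX_zero {U : Matrix (Fin n) (Fin r) ℝ} {Z : Mat n} (h : Uᵀ * Z = 0)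
    (X : Matrix (Fin n) (Fin r) ℝ) : finner (U * Xᵀ) Z = 0 := by
  rw [finner_eq_trace, Matrix.transpose_mul, Matrix.transpose_transpose, Matrix.mul_assoc,
    h, Matrix.mul_zero, Matrix.trace_zero]

lemma finner_YV_zero {V : Matrix (Fin n) (Fin r) ℝ} {Z : Mat n} (h : Z * V = 0)
    (Y : Matrix (Fin n) (Fin r) ℝ) : finner (Y * Vᵀ) Z = 0 := by
  rw [finner_eq_trace, Matrix.transpose_mul, Matrix.transpose_transpose,
    Matrix.trace_mul_cycle, h, Matrix.zero_mul, Matrix.trace_zero]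

lemma mem_orthComp_tangentT {U V : Matrix (Fin n) (Fin r) ℝ} {Z : Mat n}
    (h1 : Uᵀ * Z = 0) (h2 : Z * V = 0) : Z ∈ orthComp (tangentT U V) := by
  rintro A ⟨X, Y, rfl⟩
  rw [finner_comm, finner_add_left, finner_UX_zero h1, finner_YV_zero h2, add_zero]

lemma trace_transpose_mul_self_nonneg {p q : ℕ} (B : Matrix (Fin p) (Fin q) ℝ) :
    Matrix.trace (Bᵀ * B) = ∑ j, ∑ i, B i j * B i j := by
  simp only [Matrix.trace, Matrix.diag_apply, Matrix.mul_apply, Matrix.transpose_apply]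

lemma eq_zero_of_trace_transpose_mul_self {p q : ℕ} {B : Matrix (Fin p) (Fin q) ℝ}
    (h : Matrix.trace (Bᵀ * B) = 0) : B = 0 := by
  rw [trace_transpose_mul_self_nonneg] at h
  ext i j
  have h2 := (Finset.sum_eq_zero_iff_of_nonneg (fun j' _ => Finset.sum_nonneg
    (fun i' _ => mul_self_nonneg (B i' j')))).mp h j (Finset.mem_univ j)
  have h3 := (Finset.sum_eq_zero_iff_of_nonneg
    (fun i' _ => mul_self_nonneg (B i' j))).mp h2 i (Finset.mem_univ i)
  exact mul_self_eq_zero.mp h3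

lemma orthComp_tangentT_char {U V : Matrix (Fin n) (Fin r) ℝ} {Z : Mat n}
    (hZ : Z ∈ orthComp (tangentT U V)) : Uᵀ * Z = 0 ∧ Z * V = 0 := by
  constructor
  · have hmem : U * (Uᵀ * Z) ∈ tangentT U V := by
      refine ⟨(Uᵀ * Z)ᵀ, 0, ?_⟩
      rw [Matrix.transpose_transpose, Matrix.zero_mul, add_zero]
    have h0 := hZ _ hmem
    rw [finner_comm, finner_eq_trace, Matrix.transpose_mul, Matrix.mul_assoc] at h0
    exact eq_zero_of_trace_transpose_mul_self (B := Uᵀ * Z) h0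
  · have hmem : (Z * V) * Vᵀ ∈ tangentT U V := ⟨0, Z * V, by simp⟩
    have h0 := hZ _ hmem
    rw [finner_comm, finner_eq_trace, Matrix.transpose_mul, Matrix.transpose_transpose,
      Matrix.mul_assoc, Matrix.trace_mul_comm, Matrix.mul_assoc] at h0
    exact eq_zero_of_trace_transpose_mul_self (B := Z * V) h0

/-- The entrywise mask projection onto the support of `S0`. -/
noncomputable def maskL (S0 : Mat n) : Mat n →ₗ[ℝ] Mat n where
  toFun := fun X => Matrix.of fun i j => if S0 i j = 0 then 0 else X i j
  map_add' := by
    intro X Y; ext i j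
    simp only [Matrix.of_apply, Matrix.add_apply]
    split <;> simp
  map_smul' := by
    intro c X; ext i j
    simp only [Matrix.of_apply, Matrix.smul_apply, RingHom.id_apply, smul_eq_mul]
    split <;> simp

lemma isOrthProj_maskL (S0 : Mat n) : IsOrthProj (suppSub S0) (maskL S0) := by
  refine ⟨?_, ?_, ?_⟩
  · intro X i j h
    simp [maskL, h]
  · intro X hX
    ext i j
    simp only [maskL, LinearMap.coe_mk, AddHom.coe_mk, Matrix.of_apply]
    split
    · next h => exact (hX i j h).symm
    · rfl
  · intro X Y hY
    simp only [finner, maskL, LinearMap.coe_mk, AddHom.coe_mk, Matrix.sub_apply,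
      Matrix.of_apply]
    apply Finset.sum_eq_zero; intro i _
    apply Finset.sum_eq_zero; intro j _
    by_cases h : S0 i j = 0
    · rw [hY i j h, mul_zero]
    · simp [h]

lemma l1Norm_nonneg (X : Mat n) : 0 ≤ l1Norm X :=
  Finset.sum_nonneg fun i _ => Finset.sum_nonneg fun j _ => abs_nonneg _

lemma l1Norm_eq_zero {X : Mat n} (h : l1Norm X = 0) : X = 0 := by
  ext i j
  have h2 := (Finset.sum_eq_zero_iff_of_nonneg (fun i' _ => Finset.sum_nonneg
    (fun j' _ => abs_nonneg (X i' j')))).mp h i (Finset.mem_univ i)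
  have h3 := (Finset.sum_eq_zero_iff_of_nonneg
    (fun j' _ => abs_nonneg (X i j'))).mp h2 j (Finset.mem_univ j)
  exact abs_eq_zero.mp h3

lemma fnorm_le_l1Norm (X : Mat n) : fnorm X ≤ l1Norm X := by
  rw [fnorm]
  have h1 : finner X X ≤ (l1Norm X) ^ 2 := by
    have key : ∑ p : Fin n × Fin n, |X p.1 p.2| ^ 2 ≤ (∑ p : Fin n × Fin n, |X p.1 p.2|) ^ 2 :=
      Finset.sum_sq_le_sq_sum_of_nonneg (fun p _ => abs_nonneg _)
    have e1 : (∑ p : Fin n × Fin n, |X p.1 p.2| ^ 2) = finner X X := by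
      rw [Fintype.sum_prod_type, finner]
      exact Finset.sum_congr rfl fun i _ => Finset.sum_congr rfl fun j _ => by
        rw [sq_abs, sq]
    have e2 : (∑ p : Fin n × Fin n, |X p.1 p.2|) = l1Norm X := by
      rw [Fintype.sum_prod_type, l1Norm]
    rw [← e1, ← e2]
    exact key
  calc Real.sqrt (finner X X) ≤ Real.sqrt ((l1Norm X) ^ 2) := Real.sqrt_le_sqrt h1
    _ = |l1Norm X| := Real.sqrt_sq_eq_abs _
    _ = l1Norm X := abs_of_nonneg (l1Norm_nonneg X)

lemma abs_entry_le_linfNorm (hn : 1 ≤ n) (F : Mat n) (i j : Fin n) :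
    |F i j| ≤ linfNorm F := by
  exact le_ciSup (f := fun p : Fin n × Fin n => |F p.1 p.2|)
    (Set.Finite.bddAbove (Set.finite_range _)) (i, j)

lemma sign_subgrad (a h : ℝ) :
    |a| + Real.sign a * h + (if a = 0 then |h| else 0) ≤ |a + h| := by
  rcases lt_trichotomy a 0 with hlt | heq | hgt
  · rw [Real.sign_of_neg hlt, if_neg (ne_of_lt hlt), abs_of_neg hlt]
    have : -(a + h) ≤ |a + h| := neg_le_abs _
    linarith
  · subst heq
    simp [Real.sign_zero]
  · rw [Real.sign_of_pos hgt, if_neg (ne_of_gt hgt), abs_of_pos hgt]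
    have : a + h ≤ |a + h| := le_abs_self _
    linarith

end Sec6
section Sec7
variable {n : ℕ}

lemma IsOrthProj.fnorm_perp_le {V : Submodule ℝ (Mat n)} {P : Mat n →ₗ[ℝ] Mat n}
    (hP : IsOrthProj V P) (X : Mat n) : fnorm (X - P X) ≤ fnorm X := by
  have hd : finner (X - P X) (P X) = 0 := hP.2.2 X (P X) (hP.1 X)
  have hexp : finner X X =
      finner (P X) (P X) + 2 * finner (X - P X) (P X) + finner (X - P X) (X - P X) := by
    have hX : X = P X + (X - P X) := by abel
    calc finner X X = finner (P X + (X - P X)) (P X + (X - P X)) := by rw [← hX]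
      _ = _ := by
          rw [finner_add_left, finner_add_right, finner_add_right,
            finner_comm (P X) (X - P X)]
          ring
  have key : finner (X - P X) (X - P X) ≤ finner X X := by
    have := finner_self_nonneg (P X)
    rw [hexp, hd]; linarith
  exact Real.sqrt_le_sqrt key

lemma opNorm_bound (hn : 1 ≤ n) {A : Mat n →ₗ[ℝ] Mat n}
    (hA : ∀ Y, fnorm (A Y) ≤ fnorm Y) (X : Mat n) :
    fnorm (A X) ≤ opNorm A * fnorm X := by
  by_cases hX : X = 0
  · subst hX
    rw [map_zero, fnorm_zero, mul_zero]
  · have hc : 0 < fnorm X :=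
      lt_of_le_of_ne (fnorm_nonneg X) (fun hh => hX (fnorm_eq_zero_iff.mp hh.symm))
    set c := fnorm X with hcdef
    have h1 : fnorm (c⁻¹ • X) = 1 := by
      rw [fnorm_smul, abs_of_nonneg (inv_nonneg.mpr hc.le)]
      field_simp
      exact hcdef.symm
    have hbdd : BddAbove {t : ℝ | ∃ Z : Mat n, fnorm Z = 1 ∧ t = fnorm (A Z)} := by
      refine ⟨1, ?_⟩
      rintro y ⟨Z, hZ1, rfl⟩
      calc fnorm (A Z) ≤ fnorm Z := hA Z
        _ = 1 := hZ1
    have hmem : fnorm (A (c⁻¹ • X)) ∈ {t : ℝ | ∃ Z : Mat n, fnorm Z = 1 ∧ t = fnorm (A Z)} :=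
      ⟨c⁻¹ • X, h1, rfl⟩
    have h2 : fnorm (A (c⁻¹ • X)) ≤ opNorm A := le_csSup hbdd hmem
    rw [map_smul, fnorm_smul, abs_of_nonneg (inv_nonneg.mpr hc.le)] at h2
    have := mul_le_mul_of_nonneg_right h2 hc.le
    rw [inv_mul_eq_div, div_mul_eq_mul_div, mul_div_assoc, div_self (ne_of_gt hc),
      mul_one] at this
    linarith [this]

lemma indep_three (A B C : Submodule ℝ (Mat n))
    (hdim : Module.finrank ℝ ↥(A ⊔ B ⊔ C) =
      Module.finrank ℝ ↥A + Module.finrank ℝ ↥B + Module.finrank ℝ ↥C)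
    {a b c : Mat n} (ha : a ∈ A) (hb : b ∈ B) (hc : c ∈ C) (h : a + b + c = 0) :
    a = 0 ∧ b = 0 ∧ c = 0 := by
  have e1 : Module.finrank ℝ ↥(A ⊔ B) + Module.finrank ℝ ↥(A ⊓ B) =
      Module.finrank ℝ ↥A + Module.finrank ℝ ↥B :=
    Submodule.finrank_sup_add_finrank_inf_eq A B
  have e2 : Module.finrank ℝ ↥((A ⊔ B) ⊔ C) + Module.finrank ℝ ↥((A ⊔ B) ⊓ C) =
      Module.finrank ℝ ↥(A ⊔ B) + Module.finrank ℝ ↥C :=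
    Submodule.finrank_sup_add_finrank_inf_eq (A ⊔ B) C
  have hz1 : Module.finrank ℝ ↥(A ⊓ B) = 0 ∧ Module.finrank ℝ ↥((A ⊔ B) ⊓ C) = 0 := by
    constructor <;> omega
  have hAB : A ⊓ B = ⊥ := Submodule.finrank_eq_zero.mp hz1.1
  have hABC : (A ⊔ B) ⊓ C = ⊥ := Submodule.finrank_eq_zero.mp hz1.2
  have hcc : c = 0 := by
    have hcin : c ∈ (A ⊔ B) ⊓ C := by
      refine ⟨?_, hc⟩
      have hce : c = -(a + b) := by
        have : a + b + c - (a + b) = 0 - (a+b) := by rw [h]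
        simpa using this
      rw [hce]
      exact Submodule.neg_mem _ (Submodule.add_mem_sup ha hb)
    rw [hABC] at hcin
    exact hcin
  have hbb : b = 0 := by
    have hbin : b ∈ A ⊓ B := by
      refine ⟨?_, hb⟩
      have hbe : b = -a := by
        rw [hcc, add_zero] at h
        have : a + b - a = 0 - a := by rw [h]
        simpa using this
      rw [hbe]
      exact Submodule.neg_mem _ ha
    rw [hAB] at hbin
    exact hbin
  refine ⟨?_, hbb, hcc⟩
  rw [hcc, add_zero, hbb, add_zero] at h
  exact h

end Sec7
section Sec8
variable {n : ℕ}

lemma l1_subgrad (S0 H : Mat n) :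
    l1Norm S0 + finner (sgnMat S0) H
      + l1Norm (Matrix.of fun i j => if S0 i j = 0 then H i j else 0)
      ≤ l1Norm (S0 + H) := by
  simp only [l1Norm, finner, ← Finset.sum_add_distrib]
  apply Finset.sum_le_sum; intro i _
  apply Finset.sum_le_sum; intro j _
  have key := sign_subgrad (S0 i j) (H i j)
  simp only [Matrix.add_apply, Matrix.of_apply, sgnMat]
  by_cases h : S0 i j = 0
  · simp only [if_pos h] at key ⊢
    rw [h] at key ⊢
    simpa using key
  · simp only [if_neg h] at key ⊢
    simpa using key

lemma finner_linf_bound (hn : 1 ≤ n) {S0 F : Mat n} (H : Mat n)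
    (hF : ∀ i j, S0 i j ≠ 0 → F i j = 0) :
    finner F H ≤ linfNorm F
      * l1Norm (Matrix.of fun i j => if S0 i j = 0 then H i j else 0) := by
  simp only [finner, l1Norm, Finset.mul_sum]
  apply Finset.sum_le_sum; intro i _
  apply Finset.sum_le_sum; intro j _
  by_cases h : S0 i j = 0
  · simp only [Matrix.of_apply, if_pos h]
    calc F i j * H i j ≤ |F i j * H i j| := le_abs_self _
      _ = |F i j| * |H i j| := abs_mul _ _
      _ ≤ linfNorm F * |H i j| :=
          mul_le_mul_of_nonneg_right (abs_entry_le_linfNorm hn F i j) (abs_nonneg _)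
  · rw [hF i j h, zero_mul]
    simp [h]

end Sec8
lemma fnorm_neg {n : ℕ} (X : Mat n) : fnorm (-X) = fnorm X := by
  have : (-X : Mat n) = (-1 : ℝ) • X := by ext i j; simp
  rw [this, fnorm_smul]; norm_num

lemma fnorm_sub_le {n : ℕ} (X Y : Mat n) : fnorm (X - Y) ≤ fnorm X + fnorm Y := by
  rw [sub_eq_add_neg]
  calc fnorm (X + -Y) ≤ fnorm X + fnorm (-Y) := fnorm_add_le X (-Y)
    _ = fnorm X + fnorm Y := by rw [fnorm_neg]

set_option maxHeartbeats 1000000 in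
/-- Principal component pursuit with reduced linear measurements
(Lemma 1 of the paper): under the dual-certificate conditions, `(L₀, S₀)` is the unique
minimizer of `‖L‖₊ + λ‖S‖₁` subject to `P_Q M = P_Q (L + S)`. -/
theorem statement1 {n r : ℕ} (hn : 1 ≤ n)
    (L0 S0 M : Mat n) (U V : Matrix (Fin n) (Fin r) ℝ) (d : Fin r → ℝ)
    (hU : Uᵀ * U = 1) (hV : Vᵀ * V = 1) (hd : ∀ i, 0 < d i)
    (hL0 : L0 = U * Matrix.diagonal d * Vᵀ)
    (hM : M = L0 + S0)
    (Q : Submodule ℝ (Mat n)) (lam : ℝ) (hlam0 : 0 < lam) (hlam1 : lam < 1)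
    (PQ PT PΩ PΓperp : Mat n →ₗ[ℝ] Mat n)
    (hPQ : IsOrthProj Q PQ)
    (hPT : IsOrthProj (tangentT U V) PT)
    (hPΩ : IsOrthProj (suppSub S0) PΩ)
    (hPΓperp : IsOrthProj (orthComp (Q ⊓ orthComp (tangentT U V))) PΓperp)
    (hdim : Module.finrank ℝ ↥(orthComp Q ⊔ tangentT U V ⊔ suppSub S0) =
      Module.finrank ℝ ↥(orthComp Q) + Module.finrank ℝ ↥(tangentT U V) +
        Module.finrank ℝ ↥(suppSub S0))
    (hop : opNorm (PΩ ∘ₗ PΓperp) < 1 / 2)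
    (W F D : Mat n)
    (heq : U * Vᵀ + W = lam • (sgnMat S0 + F + PΩ D))
    (hmemQ : U * Vᵀ + W ∈ Q)
    (hW1 : PT W = 0) (hW2 : specNorm W < 1 / 2)
    (hF1 : PΩ F = 0) (hF2 : linfNorm F < 1 / 2)
    (hD : fnorm (PΩ D) ≤ 1 / 4) :
    (∀ L S : Mat n, PQ (L + S) = PQ M →
      nucNorm L0 + lam * l1Norm S0 ≤ nucNorm L + lam * l1Norm S) ∧
    (∀ L S : Mat n, PQ (L + S) = PQ M →
      nucNorm L + lam * l1Norm S = nucNorm L0 + lam * l1Norm S0 →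
      L = L0 ∧ S = S0) := by
  have hmask : PΩ = maskL S0 := hPΩ.unique (isOrthProj_maskL S0)
  have hL0T : L0 ∈ tangentT U V := ⟨0, U * Matrix.diagonal d, by rw [hL0]; simp⟩
  have hL0t : L0ᵀ = V * Matrix.diagonal d * Uᵀ := by
    rw [hL0, Matrix.transpose_mul, Matrix.transpose_mul, Matrix.transpose_transpose,
      Matrix.diagonal_transpose, ← Matrix.mul_assoc]
  -- sum of d
  have hsumd : finner L0 (U * Vᵀ) = ∑ i, d i := by
    rw [finner_eq_trace, hL0t]
    calc Matrix.trace (V * Matrix.diagonal d * Uᵀ * (U * Vᵀ))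
        = Matrix.trace ((V * Matrix.diagonal d) * ((Uᵀ * U) * Vᵀ)) := by
          rw [Matrix.mul_assoc (V * Matrix.diagonal d), Matrix.mul_assoc Uᵀ]
      _ = Matrix.trace ((V * Matrix.diagonal d) * Vᵀ) := by rw [hU, Matrix.one_mul]
      _ = Matrix.trace (Vᵀ * (V * Matrix.diagonal d)) := Matrix.trace_mul_comm _ _
      _ = Matrix.trace ((Vᵀ * V) * Matrix.diagonal d) := by rw [Matrix.mul_assoc]
      _ = Matrix.trace (Matrix.diagonal d) := by rw [hV, Matrix.one_mul]
      _ = ∑ i, d i := Matrix.trace_diagonal d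
  -- nucNorm L0 ≤ ∑ d
  have hnucL0 : nucNorm L0 ≤ ∑ i, d i := by
    obtain ⟨W0', h1, h2, _, _, _⟩ := exists_dual L0
    rw [← h1]
    have key : finner L0 W0' = ∑ k, (Uᵀ * W0' * V) k k * d k := by
      rw [finner_eq_trace, hL0t]
      calc Matrix.trace (V * Matrix.diagonal d * Uᵀ * W0')
          = Matrix.trace ((V * Matrix.diagonal d) * (Uᵀ * W0')) := by
            rw [Matrix.mul_assoc (V * Matrix.diagonal d)]
        _ = Matrix.trace ((Uᵀ * W0') * (V * Matrix.diagonal d)) := Matrix.trace_mul_comm _ _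
        _ = Matrix.trace (Uᵀ * W0' * V * Matrix.diagonal d) := by
            rw [Matrix.mul_assoc (Uᵀ * W0') V (Matrix.diagonal d)]
        _ = ∑ k, (Uᵀ * W0' * V) k k * d k := by
            rw [Matrix.trace]
            exact Finset.sum_congr rfl fun k _ => by
              rw [Matrix.diag_apply, Matrix.mul_diagonal]
    rw [key]
    apply Finset.sum_le_sum
    intro k _
    have hdk : (Uᵀ * W0' * V) k k ≤ 1 := by
      have edot : (Uᵀ * W0' * V) k k = (fun i => U i k) ⬝ᵥ (W0' *ᵥ (fun j => V j k)) := by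
        simp only [Matrix.mul_apply, Matrix.transpose_apply, dotProduct,
          Matrix.mulVec, Finset.sum_mul, Finset.mul_sum]
        rw [Finset.sum_comm]
        exact Finset.sum_congr rfl fun i _ => Finset.sum_congr rfl fun j _ => by ring
      have huk : (fun i => U i k) ⬝ᵥ (fun i => U i k) = 1 := by
        have : (Uᵀ * U) k k = (1 : Matrix (Fin r) (Fin r) ℝ) k k := by rw [hU]
        simpa [Matrix.mul_apply, Matrix.transpose_apply, dotProduct,
          Matrix.one_apply] using this
      have hvk : (fun j => V j k) ⬝ᵥ (fun j => V j k) = 1 := by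
        have : (Vᵀ * V) k k = (1 : Matrix (Fin r) (Fin r) ℝ) k k := by rw [hV]
        simpa [Matrix.mul_apply, Matrix.transpose_apply, dotProduct,
          Matrix.one_apply] using this
      rw [edot]
      calc (fun i => U i k) ⬝ᵥ (W0' *ᵥ (fun j => V j k))
          ≤ specNorm W0' * (Real.sqrt ((fun i => U i k) ⬝ᵥ (fun i => U i k)) *
            Real.sqrt ((fun j => V j k) ⬝ᵥ (fun j => V j k))) := dot_mulVec_le _ _ _
        _ ≤ 1 := by rw [huk, hvk, Real.sqrt_one, mul_one, mul_one]; exact h2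
    nlinarith [hd k, (hd k).le]
  -- the main quantitative bound
  have key : ∀ L S : Mat n, PQ (L + S) = PQ M →
      (1 - lam)/2 * nucNorm ((L - L0) - PT (L - L0))
        + lam/4 * l1Norm (Matrix.of fun i j => if S0 i j = 0 then (S - S0) i j else 0)
        ≤ (nucNorm L + lam * l1Norm S) - (nucNorm L0 + lam * l1Norm S0) := by
    intro L S hLS
    set HL := L - L0 with hHL
    set HS := S - S0 with hHS
    set B := HL - PT HL with hBdef
    set cHS : Mat n := Matrix.of fun i j => if S0 i j = 0 then HS i j else 0 with hcHS
    -- orthogonality to Q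
    have hg0 : PQ (HL + HS) = 0 := by
      have e : HL + HS = (L + S) - M := by rw [hM, hHL, hHS]; abel
      rw [e, map_sub, hLS, sub_self]
    have hgQ : (HL + HS) ∈ orthComp Q := by
      intro Y hY
      have h := hPQ.2.2 (HL + HS) Y hY
      rwa [hg0, sub_zero] at h
    -- B facts
    have hBperp : B ∈ orthComp (tangentT U V) := hPT.proj_perp HL
    obtain ⟨hUB, hBV⟩ := orthComp_tangentT_char hBperp
    obtain ⟨W0, hW0nuc, hW0spec, hW0idem, hW0left, hW0right⟩ := exists_dual B
    have hUW0 : Uᵀ * W0 = 0 := hW0left Uᵀ hUB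
    obtain ⟨hW0V, hPvV⟩ := hW0right V hBV
    have hW0T : W0 ∈ orthComp (tangentT U V) := mem_orthComp_tangentT hUW0 hW0V
    -- spectral bound on G
    set G := U * Vᵀ + W0 with hG
    have hGspec : specNorm G ≤ 1 := by
      apply transpose_mul_self_idem_specNorm_le
      have hW0tU : W0ᵀ * U = 0 := by
        have h := congrArg Matrix.transpose hUW0
        rwa [Matrix.transpose_mul, Matrix.transpose_transpose, Matrix.transpose_zero] at h
      have hGtG : Gᵀ * G = V * Vᵀ + W0ᵀ * W0 := by
        rw [hG, Matrix.transpose_add, Matrix.transpose_mul, Matrix.transpose_transpose,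
          Matrix.add_mul, Matrix.mul_add, Matrix.mul_add]
        have e1 : V * Uᵀ * (U * Vᵀ) = V * Vᵀ := by
          rw [Matrix.mul_assoc V Uᵀ, ← Matrix.mul_assoc Uᵀ, hU, Matrix.one_mul]
        have e2 : V * Uᵀ * W0 = 0 := by rw [Matrix.mul_assoc, hUW0, Matrix.mul_zero]
        have e3 : W0ᵀ * (U * Vᵀ) = 0 := by
          rw [← Matrix.mul_assoc, hW0tU, Matrix.zero_mul]
        rw [e1, e2, e3, add_zero, zero_add]
      rw [hGtG]
      have hPvsym : (W0ᵀ * W0)ᵀ = W0ᵀ * W0 := by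
        rw [Matrix.transpose_mul, Matrix.transpose_transpose]
      have hVtPv : Vᵀ * (W0ᵀ * W0) = 0 := by
        have h := congrArg Matrix.transpose hPvV
        rwa [Matrix.transpose_mul, hPvsym, Matrix.transpose_zero] at h
      rw [Matrix.add_mul, Matrix.mul_add, Matrix.mul_add]
      have f1 : V * Vᵀ * (V * Vᵀ) = V * Vᵀ := by
        rw [Matrix.mul_assoc V Vᵀ, ← Matrix.mul_assoc Vᵀ, hV, Matrix.one_mul]
      have f2 : V * Vᵀ * (W0ᵀ * W0) = 0 := by
        rw [Matrix.mul_assoc, hVtPv, Matrix.mul_zero]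
      have f3 : W0ᵀ * W0 * (V * Vᵀ) = 0 := by
        rw [← Matrix.mul_assoc, hPvV, Matrix.zero_mul]
      rw [f1, f2, f3, hW0idem, add_zero, zero_add]
    -- nuclear chain
    have hLd : L = L0 + HL := by rw [hHL]; abel
    have hHLd : HL = PT HL + B := by rw [hBdef]; abel
    have hNuc : nucNorm L0 + finner HL (U * Vᵀ) + nucNorm B ≤ nucNorm L := by
      have h1 : finner L G ≤ nucNorm L := by
        have ha := finner_le_nucNorm_mul_specNorm L G
        nlinarith [nucNorm_nonneg L]
      have hexp : finner L G = finner L0 (U * Vᵀ) + finner L0 W0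
          + finner HL (U * Vᵀ) + finner HL W0 := by
        rw [hLd, hG, finner_add_left, finner_add_right, finner_add_right]
        ring
      have hL0W0 : finner L0 W0 = 0 := by
        rw [finner_comm]; exact hW0T L0 hL0T
      have hHLW0 : finner HL W0 = nucNorm B := by
        nth_rewrite 1 [hHLd]
        rw [finner_add_left, hW0nuc]
        have h0 : finner (PT HL) W0 = 0 := by
          rw [finner_comm]; exact hW0T (PT HL) (hPT.1 HL)
        rw [h0, zero_add]
      rw [hexp, hL0W0, hHLW0, add_zero] at h1
      rw [hsumd] at h1
      linarith [hnucL0]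
    -- l1 chain
    have hSd : S = S0 + HS := by rw [hHS]; abel
    have hL1 : l1Norm S0 + finner (sgnMat S0) HS + l1Norm cHS ≤ l1Norm S := by
      rw [hSd]; exact l1_subgrad S0 HS
    -- pairing bounds
    have hHLW : finner HL W ≤ 1/2 * nucNorm B := by
      have hPTW : finner (PT HL) W = 0 := by
        rw [hPT.selfAdjoint HL W, hW1, finner_zero_right]
      have hBW : finner B W ≤ nucNorm B * specNorm W := finner_le_nucNorm_mul_specNorm B W
      have h3 : nucNorm B * specNorm W ≤ nucNorm B * (1/2) :=
        mul_le_mul_of_nonneg_left hW2.le (nucNorm_nonneg B)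
      nth_rewrite 1 [hHLd]
      rw [finner_add_left, hPTW, zero_add]
      linarith
    have hFz : ∀ i j, S0 i j ≠ 0 → F i j = 0 := by
      intro i j hij
      have hmF : maskL S0 F = 0 := by rw [← hmask]; exact hF1
      have h := congrFun (congrFun (congrArg (fun (M : Mat n) => (M : Fin n → Fin n → ℝ)) hmF) i) j
      simpa [maskL, hij] using h
    have hHSF : finner HS F ≤ 1/2 * l1Norm cHS := by
      have h1 := finner_linf_bound hn (S0 := S0) HS hFz
      have h2 : linfNorm F * l1Norm cHS ≤ 1/2 * l1Norm cHS :=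
        mul_le_mul_of_nonneg_right hF2.le (l1Norm_nonneg _)
      rw [finner_comm]
      calc finner F HS ≤ linfNorm F * l1Norm cHS := h1
        _ ≤ 1/2 * l1Norm cHS := h2
    have hHSD : finner HS (PΩ D) ≤ 1/4 * fnorm (PΩ HS) := by
      have h1 : finner HS (PΩ D) = finner (PΩ HS) (PΩ D) := by
        rw [hPΩ.selfAdjoint HS (PΩ D), hPΩ.idem]
      have h2 : finner (PΩ HS) (PΩ D) ≤ fnorm (PΩ HS) * fnorm (PΩ D) :=
        finner_le_fnorm_mul_fnorm _ _
      have h3 : fnorm (PΩ HS) * fnorm (PΩ D) ≤ fnorm (PΩ HS) * (1/4) :=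
        mul_le_mul_of_nonneg_left hD (fnorm_nonneg _)
      rw [h1]
      linarith
    -- bounding the Frobenius norm of PΩ HS
    have hfa : fnorm (PΩ HS) ≤ l1Norm cHS + 2 * nucNorm B := by
      have hfixQ : PΓperp (HL + HS) = HL + HS := by
        apply hPΓperp.2.1
        intro Z hZ
        exact hgQ Z hZ.1
      have hfixT : ∀ X ∈ tangentT U V, PΓperp X = X := by
        intro X hX
        apply hPΓperp.2.1
        intro Z hZ
        rw [finner_comm]
        exact hZ.2 X hX
      have hsplit : HS - PΓperp HS = -(B - PΓperp B) := by
        have h1 : PΓperp HS = PΓperp (HL + HS) - PΓperp (PT HL) - PΓperp B := by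
          rw [← map_sub, ← map_sub]
          congr 1
          rw [hBdef]
          abel
        rw [h1, hfixQ, hfixT (PT HL) (hPT.1 HL), hBdef]
        abel
      have hdecompPΩ : PΩ HS = PΩ (PΓperp HS) - PΩ (B - PΓperp B) := by
        have e : HS = PΓperp HS + (HS - PΓperp HS) := by abel
        calc PΩ HS = PΩ (PΓperp HS + (HS - PΓperp HS)) := by rw [← e]
          _ = PΩ (PΓperp HS) + PΩ (HS - PΓperp HS) := map_add _ _ _
          _ = PΩ (PΓperp HS) + PΩ (-(B - PΓperp B)) := by rw [hsplit]
          _ = PΩ (PΓperp HS) - PΩ (B - PΓperp B) := by rw [map_neg]; abel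
      have hterm1 : fnorm (PΩ (PΓperp HS)) ≤ 1/2 * fnorm HS := by
        have hcontr : ∀ Y, fnorm ((PΩ ∘ₗ PΓperp) Y) ≤ fnorm Y := by
          intro Y
          calc fnorm (PΩ (PΓperp Y)) ≤ fnorm (PΓperp Y) := hPΩ.fnorm_proj_le _
            _ ≤ fnorm Y := hPΓperp.fnorm_proj_le Y
        have h1 := opNorm_bound hn hcontr HS
        have h2 : opNorm (PΩ ∘ₗ PΓperp) * fnorm HS ≤ 1/2 * fnorm HS := by
          apply mul_le_mul_of_nonneg_right hop.le (fnorm_nonneg HS)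
        calc fnorm (PΩ (PΓperp HS)) = fnorm ((PΩ ∘ₗ PΓperp) HS) := rfl
          _ ≤ opNorm (PΩ ∘ₗ PΓperp) * fnorm HS := h1
          _ ≤ 1/2 * fnorm HS := h2
      have hterm2 : fnorm (PΩ (B - PΓperp B)) ≤ nucNorm B := by
        calc fnorm (PΩ (B - PΓperp B)) ≤ fnorm (B - PΓperp B) := hPΩ.fnorm_proj_le _
          _ ≤ fnorm B := hPΓperp.fnorm_perp_le B
          _ ≤ nucNorm B := fnorm_le_nucNorm B
      have hAsum : fnorm (PΩ HS) ≤ 1/2 * fnorm HS + nucNorm B := by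
        rw [hdecompPΩ]
        calc fnorm (PΩ (PΓperp HS) - PΩ (B - PΓperp B))
            ≤ fnorm (PΩ (PΓperp HS)) + fnorm (PΩ (B - PΓperp B)) := fnorm_sub_le _ _
          _ ≤ 1/2 * fnorm HS + nucNorm B := add_le_add hterm1 hterm2
      have hcomask : HS - PΩ HS = cHS := by
        rw [hmask]
        ext i j
        simp only [Matrix.sub_apply, maskL, LinearMap.coe_mk, AddHom.coe_mk,
          Matrix.of_apply, hcHS]
        by_cases h : S0 i j = 0 <;> simp [h]
      have hHSnorm : fnorm HS ≤ fnorm (PΩ HS) + l1Norm cHS := by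
        have e : HS = PΩ HS + (HS - PΩ HS) := by abel
        calc fnorm HS = fnorm (PΩ HS + (HS - PΩ HS)) := by rw [← e]
          _ ≤ fnorm (PΩ HS) + fnorm (HS - PΩ HS) := fnorm_add_le _ _
          _ = fnorm (PΩ HS) + fnorm cHS := by rw [hcomask]
          _ ≤ fnorm (PΩ HS) + l1Norm cHS := by linarith [fnorm_le_l1Norm cHS]
      linarith
    -- combine everything
    have hpair : finner HL (U * Vᵀ + W) + finner HS (U * Vᵀ + W) = 0 := by
      rw [← finner_add_left]
      exact hgQ _ hmemQ
    have hexpand : finner HS (U * Vᵀ + W)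
        = lam * (finner HS (sgnMat S0) + finner HS F + finner HS (PΩ D)) := by
      rw [heq, finner_smul_right, finner_add_right, finner_add_right]
    have hHLUVW : finner HL (U * Vᵀ) = finner HL (U * Vᵀ + W) - finner HL W := by
      rw [finner_add_right]; ring
    have hsgncomm : finner (sgnMat S0) HS = finner HS (sgnMat S0) := finner_comm _ _
    -- nonnegativity facts
    have hβ : 0 ≤ nucNorm B := nucNorm_nonneg B
    have hk : 0 ≤ l1Norm cHS := l1Norm_nonneg cHS
    have ha : 0 ≤ fnorm (PΩ HS) := fnorm_nonneg _
    -- products with lam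
    have p1 : lam * finner HS F ≤ lam * (1/2 * l1Norm cHS) :=
      mul_le_mul_of_nonneg_left hHSF hlam0.le
    have p2 : lam * finner HS (PΩ D) ≤ lam * (1/4 * fnorm (PΩ HS)) :=
      mul_le_mul_of_nonneg_left hHSD hlam0.le
    have p3 : lam * fnorm (PΩ HS) ≤ lam * (l1Norm cHS + 2 * nucNorm B) :=
      mul_le_mul_of_nonneg_left hfa hlam0.le
    have p4 : lam * (l1Norm S0 + finner (sgnMat S0) HS + l1Norm cHS) ≤ lam * l1Norm S :=
      mul_le_mul_of_nonneg_left hL1 hlam0.le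
    have hHLUV : finner HL (U * Vᵀ)
        = -(lam * (finner HS (sgnMat S0) + finner HS F + finner HS (PΩ D))) - finner HL W := by
      rw [hHLUVW, ← hexpand]
      linarith [hpair]
    have hsgnp : lam * finner (sgnMat S0) HS = lam * finner HS (sgnMat S0) := by
      rw [hsgncomm]
    ring_nf at p1 p2 p3 p4 hHLUV hsgnp ⊢
    linarith [p1, p2, p3, p4, hNuc, hHLW, hHLUV, hβ, hk, ha, hsgnp]
  constructor
  · intro L S hLS
    have h := key L S hLS
    have hb := nucNorm_nonneg ((L - L0) - PT (L - L0))
    have hkk := l1Norm_nonneg (Matrix.of fun i j => if S0 i j = 0 then (S - S0) i j else 0)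
    nlinarith [h, mul_nonneg (by linarith : (0:ℝ) ≤ (1 - lam)/2) hb,
      mul_nonneg (by linarith : (0:ℝ) ≤ lam/4) hkk]
  · intro L S hLS hEq
    have h := key L S hLS
    rw [hEq] at h
    have hb := nucNorm_nonneg ((L - L0) - PT (L - L0))
    have hkk := l1Norm_nonneg (Matrix.of fun i j => if S0 i j = 0 then (S - S0) i j else 0)
    have hco1 : (0:ℝ) < (1 - lam)/2 := by linarith
    have hco2 : (0:ℝ) < lam/4 := by linarith
    have hβ0 : nucNorm ((L - L0) - PT (L - L0)) = 0 := by nlinarith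
    have hk0 : l1Norm (Matrix.of fun i j => if S0 i j = 0 then (S - S0) i j else 0) = 0 := by
      nlinarith
    have hBz : (L - L0) - PT (L - L0) = 0 := by
      apply fnorm_eq_zero_iff.mp
      have h1 := fnorm_le_nucNorm ((L - L0) - PT (L - L0))
      have h2 := fnorm_nonneg ((L - L0) - PT (L - L0))
      linarith [hβ0 ▸ h1]
    have hHLT : (L - L0) ∈ tangentT U V := by
      have hPTeq : PT (L - L0) = L - L0 := (sub_eq_zero.mp hBz).symm
      rw [← hPTeq]
      exact hPT.1 _
    have hcz : (Matrix.of fun i j => if S0 i j = 0 then (S - S0) i j else 0) = 0 :=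
      l1Norm_eq_zero hk0
    have hHSO : (S - S0) ∈ suppSub S0 := by
      intro i j hij
      have hc := congrFun (congrFun (congrArg
        (fun (M : Mat n) => (M : Fin n → Fin n → ℝ)) hcz) i) j
      simpa [hij] using hc
    have hg0 : PQ ((L - L0) + (S - S0)) = 0 := by
      have e : (L - L0) + (S - S0) = (L + S) - M := by rw [hM]; abel
      rw [e, map_sub, hLS, sub_self]
    have hgQ : ((L - L0) + (S - S0)) ∈ orthComp Q := by
      intro Y hY
      have h2 := hPQ.2.2 ((L - L0) + (S - S0)) Y hY
      rwa [hg0, sub_zero] at h2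
    obtain ⟨_, hbz, hcz2⟩ := indep_three (orthComp Q) (tangentT U V) (suppSub S0) hdim
      hgQ (Submodule.neg_mem _ hHLT) (Submodule.neg_mem _ hHSO) (by abel)
    constructor
    · have hLe : L - L0 = 0 := by rwa [neg_eq_zero] at hbz
      exact sub_eq_zero.mp hLe
    · have hSe : S - S0 = 0 := by rwa [neg_eq_zero] at hcz2
      exact sub_eq_zero.mp hSe
end

section
/- Let V and W be linear subspaces of a finite-dimensional real inner product space with a := ‖P_V P_W‖ < 1, and let B ∈ V. Then the matrix X* := P_{W^⊥} Σ_{k≥0} (P_V P_W P_V)^k B satisfies P_V X* = B and P_W X* = 0, and ‖X*‖ ≤ ‖B‖/(1 − a²), where ‖·‖ on vectors is the norm induced by the inner product. -/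
/-- The orthogonal projection onto a subspace `V`, viewed as a continuous linear
endomorphism of the ambient space. -/
noncomputable def projCLM {E : Type*} [NormedAddCommGroup E] [InnerProductSpace ℝ E]
    [FiniteDimensional ℝ E] (V : Submodule ℝ E) : E →L[ℝ] E :=
  V.subtypeL.comp (Submodule.orthogonalProjection V)

section aux

variable {E : Type*} [NormedAddCommGroup E] [InnerProductSpace ℝ E]
    [FiniteDimensional ℝ E] (V : Submodule ℝ E)

lemma projCLM_apply (x : E) : projCLM V x = (Submodule.orthogonalProjection V x : E) := rfl

lemma projCLM_mem_eq_self {x : E} (hx : x ∈ V) : projCLM V x = x := by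
  exact Submodule.starProjection_eq_self_iff.2 hx

lemma projCLM_idem (x : E) : projCLM V (projCLM V x) = projCLM V x :=
  projCLM_mem_eq_self V (by simp [projCLM_apply])

lemma projCLM_orthogonal_apply (x : E) : projCLM Vᗮ x = x - projCLM V x := by
  have h := Submodule.starProjection_add_starProjection_orthogonal (K := V) x
  rw [projCLM_apply, projCLM_apply, eq_sub_iff_add_eq, add_comm]
  exact h

lemma projCLM_norm_apply_le (x : E) : ‖projCLM V x‖ ≤ ‖x‖ := by
  rw [projCLM_apply]
  calc ‖(Submodule.orthogonalProjection V x : E)‖ = ‖Submodule.orthogonalProjection V x‖ := rfl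
    _ ≤ ‖(Submodule.orthogonalProjection V : E →L[ℝ] V)‖ * ‖x‖ := (Submodule.orthogonalProjection V).le_opNorm x
    _ ≤ 1 * ‖x‖ := by
        have := Submodule.orthogonalProjectionOnto_norm_le V
        gcongr
    _ = ‖x‖ := one_mul ‖x‖

end aux

/-- If `a := ‖P_V P_W‖ < 1` and `B ∈ V`, then
`X* := P_{W^⊥} Σ_{k ≥ 0} (P_V P_W P_V)^k B` satisfies `P_V X* = B`, `P_W X* = 0`, and
`‖X*‖ ≤ ‖B‖ / (1 − a²)`. -/
theorem statement6 {E : Type*} [NormedAddCommGroup E] [InnerProductSpace ℝ E]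
    [FiniteDimensional ℝ E] (V W : Submodule ℝ E) (a : ℝ)
    (ha : ‖(projCLM V).comp (projCLM W)‖ = a) (ha1 : a < 1)
    (B : E) (hB : B ∈ V) :
    projCLM V (projCLM Wᗮ
        (∑' k : ℕ, (((projCLM V).comp ((projCLM W).comp (projCLM V))) ^ k) B)) = B ∧
    projCLM W (projCLM Wᗮ
        (∑' k : ℕ, (((projCLM V).comp ((projCLM W).comp (projCLM V))) ^ k) B)) = 0 ∧
    ‖projCLM Wᗮ (∑' k : ℕ, (((projCLM V).comp ((projCLM W).comp (projCLM V))) ^ k) B)‖ ≤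
      ‖B‖ / (1 - a ^ 2) := by
  have ha0 : 0 ≤ a := ha ▸ norm_nonneg _
  have ha2 : a ^ 2 < 1 := pow_lt_one₀ ha0 ha1 two_ne_zero
  have ha2' : (0:ℝ) ≤ a ^ 2 := sq_nonneg a
  set T : E →L[ℝ] E := (projCLM V).comp ((projCLM W).comp (projCLM V)) with hT
  -- norm of T
  have hWW : (projCLM W).comp (projCLM W) = projCLM W := by
    ext x; exact projCLM_idem W x
  have hTfact : T = ((projCLM V).comp (projCLM W)).comp ((projCLM W).comp (projCLM V)) := by
    rw [ContinuousLinearMap.comp_assoc, ← ContinuousLinearMap.comp_assoc (projCLM W), hWW]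
  have hadjV : ContinuousLinearMap.adjoint (projCLM V) = projCLM V :=
    (isSelfAdjoint_starProjection V).adjoint_eq
  have hadjW : ContinuousLinearMap.adjoint (projCLM W) = projCLM W :=
    (isSelfAdjoint_starProjection W).adjoint_eq
  have hadj : ContinuousLinearMap.adjoint ((projCLM V).comp (projCLM W))
      = (projCLM W).comp (projCLM V) := by
    rw [ContinuousLinearMap.adjoint_comp, hadjV, hadjW]
  have hnormWV : ‖(projCLM W).comp (projCLM V)‖ = a := by
    rw [← hadj, LinearIsometryEquiv.norm_map, ha]
  have hTnorm : ‖T‖ ≤ a ^ 2 := by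
    rw [hTfact, sq]
    calc ‖((projCLM V).comp (projCLM W)).comp ((projCLM W).comp (projCLM V))‖
        ≤ ‖(projCLM V).comp (projCLM W)‖ * ‖(projCLM W).comp (projCLM V)‖ :=
          ContinuousLinearMap.opNorm_comp_le _ _
      _ = a * a := by rw [ha, hnormWV]
  -- bound on iterates
  have hbound : ∀ k : ℕ, ‖(T ^ k) B‖ ≤ ‖B‖ * (a ^ 2) ^ k := by
    intro k
    induction k with
    | zero => simp
    | succ k ih =>
        rw [pow_succ']
        calc ‖T ((T ^ k) B)‖ ≤ ‖T‖ * ‖(T ^ k) B‖ := T.le_opNorm _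
          _ ≤ (a ^ 2) * (‖B‖ * (a ^ 2) ^ k) := by
              apply mul_le_mul hTnorm ih (norm_nonneg _) ha2'
          _ = ‖B‖ * (a ^ 2) ^ (k + 1) := by ring
  have hgeo : Summable fun k : ℕ => ‖B‖ * (a ^ 2) ^ k :=
    (summable_geometric_of_lt_one ha2' ha2).mul_left ‖B‖
  have hsum : Summable fun k : ℕ => (T ^ k) B :=
    Summable.of_norm_bounded hgeo hbound
  set S : E := ∑' k : ℕ, (T ^ k) B with hS
  -- each term is in V
  have hterm : ∀ k : ℕ, projCLM V ((T ^ k) B) = (T ^ k) B := by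
    intro k
    cases k with
    | zero => simpa using projCLM_mem_eq_self V hB
    | succ k =>
        rw [pow_succ']
        show projCLM V (T ((T ^ k) B)) = T ((T ^ k) B)
        rw [hT]
        simp only [ContinuousLinearMap.comp_apply]
        exact projCLM_idem V _
  have hSV : projCLM V S = S := by
    rw [hS, (projCLM V).map_tsum hsum]
    exact tsum_congr hterm
  -- recursion S = B + T S
  have hshift : (∑' k : ℕ, (T ^ (k + 1)) B) = T S := by
    rw [hS, T.map_tsum hsum]
    exact tsum_congr fun k => by rw [pow_succ']; rfl
  have hrec : S = B + T S := by
    conv_lhs => rw [hS, Summable.tsum_eq_zero_add hsum]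
    rw [hshift, pow_zero, ContinuousLinearMap.one_apply]
  have hTS : T S = S - B := by
    rw [eq_sub_iff_add_eq, add_comm, ← hrec]
  refine ⟨?_, ?_, ?_⟩
  · rw [projCLM_orthogonal_apply, map_sub, hSV]
    have : projCLM V (projCLM W S) = T S := by
      conv_lhs => rw [← hSV]
      rfl
    rw [this, hTS, sub_sub_cancel]
  · rw [projCLM_apply, projCLM_apply,
      Submodule.orthogonalProjectionOnto_apply_of_mem_orthogonal (by simp)]
    simp
  · have hnorms : Summable fun k : ℕ => ‖(T ^ k) B‖ :=
      hgeo.of_nonneg_of_le (fun _ => norm_nonneg _) hbound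
    calc ‖projCLM Wᗮ S‖ ≤ ‖S‖ := projCLM_norm_apply_le _ S
      _ ≤ ∑' k : ℕ, ‖(T ^ k) B‖ := norm_tsum_le_tsum_norm hnorms
      _ ≤ ∑' k : ℕ, ‖B‖ * (a ^ 2) ^ k := Summable.tsum_le_tsum hbound hnorms hgeo
      _ = ‖B‖ * (1 - a ^ 2)⁻¹ := by
          rw [tsum_mul_left, tsum_geometric_of_lt_one ha2' ha2]
      _ = ‖B‖ / (1 - a ^ 2) := by rw [div_eq_mul_inv]
end
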